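/- Let γ > 1, 0 < k < 1, G(π) = (1-π)·(π/(1-π))^γ, and b₁ = γk/(γ + k - 1). Then the pair (A₁, b₁) with A₁ = 1/G'(b₁) solves the smooth-fit system A₁·G(b₁) = b₁ - k and A₁·G'(b₁) = 1; equivalently, G'(b₁)·(b₁ - k) - G(b₁) = 0. -/

import Mathlib

open Set

theorem stmt_6 (γ k : ℝ) (hγ : 1 < γ) (hk0 : 0 < k) (hk1 : k < 1)
    (G : ℝ → ℝ) (hG : ∀ π ∈ Ioo (0:ℝ) 1, G π = (1 - π) * (π / (1 - π)) ^ γ)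
    (b₁ : ℝ) (hb : b₁ = γ * k / (γ + k - 1))
    (A₁ : ℝ) (hA : A₁ = 1 / deriv G b₁) :
    A₁ * G b₁ = b₁ - k ∧ A₁ * deriv G b₁ = 1 ∧
      deriv G b₁ * (b₁ - k) - G b₁ = 0 := by
  have hden : 0 < γ + k - 1 := by linarith
  have hb0 : 0 < b₁ := by
    rw [hb]; positivity
  have hb1 : b₁ < 1 := by
    rw [hb, div_lt_one hden]; nlinarith
  have h1b : 0 < 1 - b₁ := by linarith
  have hkey : b₁ * (γ + k - 1) = γ * k := by
    rw [hb]; field_simp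
  set r : ℝ := (b₁ / (1 - b₁)) ^ γ with hr
  have hrpos : 0 < r := by positivity
  have hq : (0:ℝ) < b₁ / (1 - b₁) := by positivity
  -- derivative of inner function
  have hf : HasDerivAt (fun x => x / (1 - x)) (1 / (1 - b₁) ^ 2) b₁ := by
    have h := (hasDerivAt_id b₁).div
      ((hasDerivAt_const b₁ (1:ℝ)).sub (hasDerivAt_id b₁)) (ne_of_gt h1b)
    convert h using 1
    · rfl
    · rfl
    · rfl
    · simp only [Pi.sub_apply, id_eq]
      ring
  have hpow : HasDerivAt (fun x => (x / (1 - x)) ^ γ)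
      (γ * (b₁ / (1 - b₁)) ^ (γ - 1) * (1 / (1 - b₁) ^ 2)) b₁ := by
    have h := hf.rpow_const (p := γ) (Or.inl (ne_of_gt hq))
    convert h using 1
    ring
  have hmul : HasDerivAt (fun x => (1 - x) * (x / (1 - x)) ^ γ)
      ((-1) * (b₁ / (1 - b₁)) ^ γ +
        (1 - b₁) * (γ * (b₁ / (1 - b₁)) ^ (γ - 1) * (1 / (1 - b₁) ^ 2))) b₁ := by
    have h := (((hasDerivAt_const b₁ (1:ℝ)).sub (hasDerivAt_id b₁)).mul hpow)
    convert h using 1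
    · rfl
    · rfl
    · rfl
    · simp only [Pi.sub_apply, id_eq]
      ring
  have hsub : (b₁ / (1 - b₁)) ^ (γ - 1) = r * ((1 - b₁) / b₁) := by
    rw [hr, Real.rpow_sub hq, Real.rpow_one]
    field_simp
  have hD : HasDerivAt (fun x => (1 - x) * (x / (1 - x)) ^ γ)
      ((γ - b₁) / b₁ * r) b₁ := by
    convert hmul using 1
    rw [hsub]
    field_simp
    ring
  have hev : G =ᶠ[nhds b₁] fun x => (1 - x) * (x / (1 - x)) ^ γ := by
    filter_upwards [isOpen_Ioo.mem_nhds (show b₁ ∈ Ioo (0:ℝ) 1 from ⟨hb0, hb1⟩)]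
      with x hx using hG x hx
  have hderiv : deriv G b₁ = (γ - b₁) / b₁ * r := by
    rw [Filter.EventuallyEq.deriv_eq hev, hD.deriv]
  have hGb : G b₁ = (1 - b₁) * r := hG b₁ ⟨hb0, hb1⟩
  have hγb : 0 < γ - b₁ := by linarith
  have hDne : deriv G b₁ ≠ 0 := by
    rw [hderiv]; positivity
  have hsmooth : (γ - b₁) * (b₁ - k) = b₁ * (1 - b₁) := by nlinarith
  have h3 : deriv G b₁ * (b₁ - k) - G b₁ = 0 := by
    rw [hderiv, hGb]
    field_simp
    nlinarith
  refine ⟨?_, ?_, h3⟩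
  · rw [hA]
    have := h3
    field_simp at this ⊢
    linarith
  · rw [hA]
    field_simp
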